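/- Let (𝕍,ω) be a symplectic vector space with Lagrangian decomposition 𝕍 = L₁ ⊕ L₂, A ⊆ 𝕍 Lagrangian, and I ⊆ L₁ a subspace with isotropic reduction 𝕍̄ = I^⊥/I and Ā = (A ∩ I^⊥)/(A ∩ I). Then the kernel of the induced quadratic form on the image W̄₂ = p̄r₂(Ā) ⊆ L̄₂ = L₂ ∩ I^⊥ equals (A ∩ (I ⊕ L̄₂))/(A ∩ I), and the span satisfies W̄₂^⊥ corresponds to (A ∩ L₁)/(A ∩ I) under the ω-pairing between L̄₁ and L̄₂. -/

import Mathlib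

private lemma aux_orth_sup {k V : Type*} [Field k] [AddCommGroup V] [Module k V]
    (B : LinearMap.BilinForm k V) (M N : Submodule k V) :
    B.orthogonal (M ⊔ N) = B.orthogonal M ⊓ B.orthogonal N := by
  apply le_antisymm
  · exact le_inf (LinearMap.BilinForm.orthogonal_le le_sup_left)
      (LinearMap.BilinForm.orthogonal_le le_sup_right)
  · rintro x ⟨h1, h2⟩ y hy
    obtain ⟨m, hm, n, hn, rfl⟩ := Submodule.mem_sup.mp hy
    show B (m + n) x = 0
    rw [map_add, LinearMap.add_apply, show B m x = 0 from h1 m hm,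
      show B n x = 0 from h2 n hn, add_zero]

private lemma aux_orth_inf {k V : Type*} [Field k] [AddCommGroup V] [Module k V]
    [FiniteDimensional k V] (B : LinearMap.BilinForm k V)
    (hnd : B.Nondegenerate) (hrefl : B.IsRefl) (M N : Submodule k V) :
    B.orthogonal (M ⊓ N) = B.orthogonal M ⊔ B.orthogonal N := by
  have h1 : M ⊓ N = B.orthogonal (B.orthogonal M ⊔ B.orthogonal N) := by
    rw [aux_orth_sup, LinearMap.BilinForm.orthogonal_orthogonal hnd hrefl,
      LinearMap.BilinForm.orthogonal_orthogonal hnd hrefl]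
  rw [h1, LinearMap.BilinForm.orthogonal_orthogonal hnd hrefl]

/-- Let `(𝕍,ω)` be a symplectic vector space with Lagrangian decomposition
`𝕍 = L₁ ⊕ L₂`, `A ⊆ 𝕍` Lagrangian, and `I ⊆ L₁` a subspace, with isotropic reduction
`𝕍̄ = I^⊥/I`, `L̄₁ = L₁/I`, `L̄₂ = L₂ ∩ I^⊥` and `Ā = (A ∩ I^⊥)/(A ∩ I)`. Then the kernel of
the quadratic form induced (via `q^Ā`, i.e. via `ω̄(a, ·)`) on the image `W̄₂ = p̄r₂(Ā) ⊆ L̄₂`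
equals `(A ∩ (I ⊕ L̄₂))/(A ∩ I)`, and the span satisfies: `W̄₂` is the intersection of `L̄₂`
with the `ω̄`-orthogonal of `(A ∩ L₁)/(A ∩ I)`. -/
theorem stmt_14 {k V : Type*} [Field k] [AddCommGroup V] [Module k V] [FiniteDimensional k V]
    (ω : LinearMap.BilinForm k V) (halt : ω.IsAlt) (hnd : ω.Nondegenerate)
    (L₁ L₂ A : Submodule k V)
    (hL₁ : ω.orthogonal L₁ = L₁) (hL₂ : ω.orthogonal L₂ = L₂) (hA : ω.orthogonal A = A)
    (h : IsCompl L₁ L₂)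
    (I : Submodule k V) (hIL₁ : I ≤ L₁)
    (ωbar : LinearMap.BilinForm k
      ((ω.orthogonal I) ⧸ (I.comap (ω.orthogonal I).subtype)))
    (hcompat : ∀ x y : ω.orthogonal I,
      ωbar (Submodule.Quotient.mk x) (Submodule.Quotient.mk y) = ω x y)
    (Lb₁ Lb₂ Ab : Submodule k ((ω.orthogonal I) ⧸ (I.comap (ω.orthogonal I).subtype)))
    (hLb₁ : Lb₁ = Submodule.map (I.comap (ω.orthogonal I).subtype).mkQ
      (L₁.comap (ω.orthogonal I).subtype))
    (hLb₂ : Lb₂ = Submodule.map (I.comap (ω.orthogonal I).subtype).mkQ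
      (L₂.comap (ω.orthogonal I).subtype))
    (hAb : Ab = Submodule.map (I.comap (ω.orthogonal I).subtype).mkQ
      (A.comap (ω.orthogonal I).subtype))
    (hbar : IsCompl Lb₁ Lb₂)
    (W₂b : Submodule k ((ω.orthogonal I) ⧸ (I.comap (ω.orthogonal I).subtype)))
    (hW₂b : W₂b = Submodule.map
      (Lb₂.subtype ∘ₗ Submodule.linearProjOfIsCompl Lb₂ Lb₁ hbar.symm) Ab) :
    (∀ w, (w ∈ W₂b ∧ ∀ a ∈ Ab,
        (Lb₂.subtype ∘ₗ Submodule.linearProjOfIsCompl Lb₂ Lb₁ hbar.symm) a = w →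
        ∀ w' ∈ W₂b, ωbar a w' = 0)
      ↔ w ∈ Submodule.map (I.comap (ω.orthogonal I).subtype).mkQ
          ((A ⊓ (I ⊔ (L₂ ⊓ ω.orthogonal I))).comap (ω.orthogonal I).subtype)) ∧
    W₂b = ωbar.orthogonal
        (Submodule.map (I.comap (ω.orthogonal I).subtype).mkQ
          ((A ⊓ L₁).comap (ω.orthogonal I).subtype)) ⊓ Lb₂ := by
  have hrefl : ω.IsRefl := halt.isRefl
  have hL₁Ω : L₁ ≤ (ω.orthogonal I) := by
    rw [← hL₁]; exact LinearMap.BilinForm.orthogonal_le hIL₁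
  have hIΩ : I ≤ (ω.orthogonal I) := le_trans hIL₁ hL₁Ω
  have zL₁ : ∀ x ∈ L₁, ∀ y ∈ L₁, ω x y = 0 := by
    intro x hx y hy; rw [← hL₁] at hy; exact hy x hx
  have zL₂ : ∀ x ∈ L₂, ∀ y ∈ L₂, ω x y = 0 := by
    intro x hx y hy; rw [← hL₂] at hy; exact hy x hx
  have zA : ∀ x ∈ A, ∀ y ∈ A, ω x y = 0 := by
    intro x hx y hy; rw [← hA] at hy; exact hy x hx
  have horthAΩ : ω.orthogonal (A ⊓ (ω.orthogonal I)) = A ⊔ I := by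
    rw [aux_orth_inf ω hnd hrefl, hA,
      LinearMap.BilinForm.orthogonal_orthogonal hnd hrefl]
  have horthAL₁ : ω.orthogonal (A ⊓ L₁) = A ⊔ L₁ := by
    rw [aux_orth_inf ω hnd hrefl, hA, hL₁]
  have hmem : ∀ (X : Submodule k V) (u : (ω.orthogonal I) ⧸ (I.comap (ω.orthogonal I).subtype)),
      u ∈ Submodule.map (I.comap (ω.orthogonal I).subtype).mkQ (X.comap (ω.orthogonal I).subtype) ↔
        ∃ x : (ω.orthogonal I), (x : V) ∈ X ∧ (I.comap (ω.orthogonal I).subtype).mkQ x = u := by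
    intro X u
    constructor
    · rintro ⟨x, hx, rfl⟩; exact ⟨x, hx, rfl⟩
    · rintro ⟨x, hx, rfl⟩; exact ⟨x, hx, rfl⟩
  have hzero : ∀ (S T : Submodule k V), (∀ x ∈ S, ∀ y ∈ T, ω x y = 0) →
      ∀ u v : (ω.orthogonal I) ⧸ (I.comap (ω.orthogonal I).subtype), u ∈ Submodule.map (I.comap (ω.orthogonal I).subtype).mkQ (S.comap (ω.orthogonal I).subtype) →
      v ∈ Submodule.map (I.comap (ω.orthogonal I).subtype).mkQ (T.comap (ω.orthogonal I).subtype) → ωbar u v = 0 := by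
    intro S T hST u v hu hv
    obtain ⟨x, hx, rfl⟩ := (hmem S u).mp hu
    obtain ⟨y, hy, rfl⟩ := (hmem T v).mp hv
    rw [Submodule.mkQ_apply, Submodule.mkQ_apply, hcompat]
    exact hST x hx y hy
  have hPLb₂ : ∀ u, (Lb₂.subtype ∘ₗ Submodule.linearProjOfIsCompl Lb₂ Lb₁ hbar.symm) u ∈ Lb₂ := fun u =>
    (Submodule.linearProjOfIsCompl Lb₂ Lb₁ hbar.symm u).2
  have hPleft : ∀ u ∈ Lb₂, (Lb₂.subtype ∘ₗ Submodule.linearProjOfIsCompl Lb₂ Lb₁ hbar.symm) u = u := by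
    intro u hu
    have h1 : Submodule.linearProjOfIsCompl Lb₂ Lb₁ hbar.symm u = ⟨u, hu⟩ :=
      Submodule.linearProjOfIsCompl_apply_left hbar.symm ⟨u, hu⟩
    show Lb₂.subtype (Submodule.linearProjOfIsCompl Lb₂ Lb₁ hbar.symm u) = u
    rw [h1]; rfl
  have hPright : ∀ u ∈ Lb₁, (Lb₂.subtype ∘ₗ Submodule.linearProjOfIsCompl Lb₂ Lb₁ hbar.symm) u = 0 := by
    intro u hu
    have h1 : Submodule.linearProjOfIsCompl Lb₂ Lb₁ hbar.symm u = 0 :=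
      Submodule.linearProjOfIsCompl_apply_right' hbar.symm hu
    show Lb₂.subtype (Submodule.linearProjOfIsCompl Lb₂ Lb₁ hbar.symm u) = 0
    rw [h1]; rfl
  have hPsub : ∀ u, u - (Lb₂.subtype ∘ₗ Submodule.linearProjOfIsCompl Lb₂ Lb₁ hbar.symm) u ∈ Lb₁ := by
    intro u
    have hu : u ∈ Lb₁ ⊔ Lb₂ := by rw [hbar.codisjoint.eq_top]; trivial
    obtain ⟨p, hp, q, hq, rfl⟩ := Submodule.mem_sup.mp hu
    have hPq : (Lb₂.subtype ∘ₗ Submodule.linearProjOfIsCompl Lb₂ Lb₁ hbar.symm) (p + q) = q := by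
      rw [map_add, hPright p hp, hPleft q hq, zero_add]
    rw [hPq]
    simpa using hp
  constructor
  · intro w
    constructor
    · rintro ⟨hwW, hker⟩
      rw [hW₂b] at hwW
      obtain ⟨a₀, ha₀, hPa₀⟩ := hwW
      have hw2 : ∀ w' ∈ W₂b, ωbar a₀ w' = 0 := hker a₀ ha₀ hPa₀
      have hwLb₂ : w ∈ Lb₂ := by rw [← hPa₀]; exact hPLb₂ a₀
      have ha₁Lb₁ : a₀ - w ∈ Lb₁ := by rw [← hPa₀]; exact hPsub a₀
      have hkey : ∀ b ∈ Ab, ωbar (a₀ - w) b = 0 := by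
        intro b hb
        have h1 : ωbar (a₀ - w) (b - (Lb₂.subtype ∘ₗ Submodule.linearProjOfIsCompl Lb₂ Lb₁ hbar.symm) b) = 0 := by
          refine hzero L₁ L₁ zL₁ _ _ ?_ ?_
          · rw [← hLb₁]; exact ha₁Lb₁
          · rw [← hLb₁]; exact hPsub b
        have h2 : ωbar a₀ ((Lb₂.subtype ∘ₗ Submodule.linearProjOfIsCompl Lb₂ Lb₁ hbar.symm) b) = 0 := by
          refine hw2 _ ?_
          rw [hW₂b]; exact ⟨b, hb, rfl⟩
        have h3 : ωbar w ((Lb₂.subtype ∘ₗ Submodule.linearProjOfIsCompl Lb₂ Lb₁ hbar.symm) b) = 0 := by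
          refine hzero L₂ L₂ zL₂ _ _ ?_ ?_
          · rw [← hLb₂]; exact hwLb₂
          · rw [← hLb₂]; exact hPLb₂ b
        have h4 : ωbar (a₀ - w) ((Lb₂.subtype ∘ₗ Submodule.linearProjOfIsCompl Lb₂ Lb₁ hbar.symm) b) = 0 := by
          rw [map_sub, LinearMap.sub_apply, h2, h3, sub_zero]
        calc ωbar (a₀ - w) b
            = ωbar (a₀ - w) (b - (Lb₂.subtype ∘ₗ Submodule.linearProjOfIsCompl Lb₂ Lb₁ hbar.symm) b) + ωbar (a₀ - w) ((Lb₂.subtype ∘ₗ Submodule.linearProjOfIsCompl Lb₂ Lb₁ hbar.symm) b) := by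
              rw [← map_add, sub_add_cancel]
          _ = 0 := by rw [h1, h4, add_zero]
      obtain ⟨x₁, hx₁L₁, hx₁⟩ := (hmem L₁ (a₀ - w)).mp (by rw [← hLb₁]; exact ha₁Lb₁)
      have hx₁orth : (x₁ : V) ∈ ω.orthogonal (A ⊓ (ω.orthogonal I)) := by
        intro y hy
        have hb : (I.comap (ω.orthogonal I).subtype).mkQ ⟨y, hy.2⟩ ∈ Ab := by
          rw [hAb]; exact (hmem A _).mpr ⟨⟨y, hy.2⟩, hy.1, rfl⟩
        have h5 : ωbar (a₀ - w) ((I.comap (ω.orthogonal I).subtype).mkQ ⟨y, hy.2⟩) = 0 := hkey _ hb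
        rw [← hx₁, Submodule.mkQ_apply, Submodule.mkQ_apply, hcompat] at h5
        exact hrefl _ _ h5
      rw [horthAΩ] at hx₁orth
      obtain ⟨a, haA, i, hiI, hai⟩ := Submodule.mem_sup.mp hx₁orth
      have haΩ : a ∈ (ω.orthogonal I) := by
        have ha' : a = (x₁ : V) - i := by rw [← hai]; abel
        rw [ha']; exact sub_mem x₁.2 (hIΩ hiI)
      have ha₁Ab : a₀ - w ∈ Ab := by
        rw [hAb]
        refine (hmem A _).mpr ⟨⟨a, haΩ⟩, haA, ?_⟩
        rw [← hx₁, Submodule.mkQ_apply, Submodule.mkQ_apply, Submodule.Quotient.eq]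
        show ((⟨a, haΩ⟩ : (ω.orthogonal I)) - x₁ : (ω.orthogonal I)) ∈ (I.comap (ω.orthogonal I).subtype)
        show ((⟨a, haΩ⟩ : (ω.orthogonal I)) - x₁ : V) ∈ I
        have : ((⟨a, haΩ⟩ : (ω.orthogonal I)) - x₁ : V) = a - (x₁ : V) := rfl
        rw [this, ← hai]
        simpa using neg_mem hiI
      have hwAb : w ∈ Ab := by
        have hw' : w = a₀ - (a₀ - w) := by abel
        rw [hw']
        exact sub_mem ha₀ ha₁Ab
      obtain ⟨y, hyA, hy⟩ := (hmem A w).mp (by rw [← hAb]; exact hwAb)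
      obtain ⟨z, hzL₂, hz⟩ := (hmem L₂ w).mp (by rw [← hLb₂]; exact hwLb₂)
      refine (hmem _ w).mpr ⟨y, ⟨hyA, ?_⟩, hy⟩
      have hyz : ((y - z : (ω.orthogonal I)) : V) ∈ I := by
        have h6 : (I.comap (ω.orthogonal I).subtype).mkQ (y - z) = 0 := by rw [map_sub, hy, hz, sub_self]
        rw [Submodule.mkQ_apply, Submodule.Quotient.mk_eq_zero] at h6
        exact h6
      refine Submodule.mem_sup.mpr ⟨_, hyz, z, ⟨hzL₂, z.2⟩, ?_⟩
      simp
    · intro hw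
      obtain ⟨x, hx', hx⟩ := (hmem _ w).mp hw
      obtain ⟨hxA, hxI⟩ := hx'
      obtain ⟨i, hiI, z, hz, hiz⟩ := Submodule.mem_sup.mp hxI
      have hwAb : w ∈ Ab := by
        rw [hAb]; exact (hmem A w).mpr ⟨x, hxA, hx⟩
      have hwLb₂ : w ∈ Lb₂ := by
        rw [hLb₂]
        refine (hmem L₂ w).mpr ⟨⟨z, hz.2⟩, hz.1, ?_⟩
        rw [← hx, Submodule.mkQ_apply, Submodule.mkQ_apply, Submodule.Quotient.eq]
        show ((⟨z, hz.2⟩ : (ω.orthogonal I)) - x : (ω.orthogonal I)) ∈ (I.comap (ω.orthogonal I).subtype)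
        show ((⟨z, hz.2⟩ : (ω.orthogonal I)) - x : V) ∈ I
        have : ((⟨z, hz.2⟩ : (ω.orthogonal I)) - x : V) = z - (x : V) := rfl
        rw [this, ← hiz]
        simpa using neg_mem hiI
      refine ⟨?_, ?_⟩
      · rw [hW₂b]; exact ⟨w, hwAb, hPleft w hwLb₂⟩
      · intro a ha hPa w' hw'
        rw [hW₂b] at hw'
        obtain ⟨b, hb, rfl⟩ := hw'
        have hawLb₁ : a - w ∈ Lb₁ := by rw [← hPa]; exact hPsub a
        have h1 : ωbar (a - w) (b - (Lb₂.subtype ∘ₗ Submodule.linearProjOfIsCompl Lb₂ Lb₁ hbar.symm) b) = 0 := by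
          refine hzero L₁ L₁ zL₁ _ _ ?_ ?_
          · rw [← hLb₁]; exact hawLb₁
          · rw [← hLb₁]; exact hPsub b
        have h2 : ωbar a b = 0 := by
          refine hzero A A zA _ _ ?_ ?_
          · rw [← hAb]; exact ha
          · rw [← hAb]; exact hb
        have h3 : ωbar w b = 0 := by
          refine hzero A A zA _ _ ?_ ?_
          · rw [← hAb]; exact hwAb
          · rw [← hAb]; exact hb
        have h4 : ωbar w ((Lb₂.subtype ∘ₗ Submodule.linearProjOfIsCompl Lb₂ Lb₁ hbar.symm) b) = 0 := by
          refine hzero L₂ L₂ zL₂ _ _ ?_ ?_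
          · rw [← hLb₂]; exact hwLb₂
          · rw [← hLb₂]; exact hPLb₂ b
        have h5 : ωbar (a - w) b = 0 := by
          rw [map_sub, LinearMap.sub_apply, h2, h3, sub_zero]
        have h6 : ωbar (a - w) ((Lb₂.subtype ∘ₗ Submodule.linearProjOfIsCompl Lb₂ Lb₁ hbar.symm) b) = 0 := by
          have h1' := h1
          rw [map_sub, h5, zero_sub, neg_eq_zero] at h1'
          exact h1'
        calc ωbar a ((Lb₂.subtype ∘ₗ Submodule.linearProjOfIsCompl Lb₂ Lb₁ hbar.symm) b)
            = ωbar (a - w) ((Lb₂.subtype ∘ₗ Submodule.linearProjOfIsCompl Lb₂ Lb₁ hbar.symm) b) + ωbar w ((Lb₂.subtype ∘ₗ Submodule.linearProjOfIsCompl Lb₂ Lb₁ hbar.symm) b) := by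
              rw [← LinearMap.add_apply, ← map_add, sub_add_cancel]
          _ = 0 := by rw [h6, h4, add_zero]
  · apply le_antisymm
    · rw [hW₂b]
      rintro w ⟨b, hb, rfl⟩
      refine ⟨?_, hPLb₂ b⟩
      intro c hc
      have h1 : ωbar c b = 0 := by
        refine hzero (A ⊓ L₁) A (fun x hx y hy => zA x hx.1 y hy) _ _ hc ?_
        rw [← hAb]; exact hb
      have h2 : ωbar c (b - (Lb₂.subtype ∘ₗ Submodule.linearProjOfIsCompl Lb₂ Lb₁ hbar.symm) b) = 0 := by
        refine hzero (A ⊓ L₁) L₁ (fun x hx y hy => zL₁ x hx.2 y hy) _ _ hc ?_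
        rw [← hLb₁]; exact hPsub b
      show ωbar c ((Lb₂.subtype ∘ₗ Submodule.linearProjOfIsCompl Lb₂ Lb₁ hbar.symm) b) = 0
      rw [map_sub, h1, zero_sub, neg_eq_zero] at h2
      exact h2
    · rintro w ⟨hworth, hwLb₂⟩
      obtain ⟨y, hyL₂, hy⟩ := (hmem L₂ w).mp (by rw [← hLb₂]; exact hwLb₂)
      have hyorth : (y : V) ∈ ω.orthogonal (A ⊓ L₁) := by
        intro c hc
        have hcΩ : c ∈ (ω.orthogonal I) := hL₁Ω hc.2
        have h1 : ωbar ((I.comap (ω.orthogonal I).subtype).mkQ ⟨c, hcΩ⟩) w = 0 :=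
          hworth _ ((hmem (A ⊓ L₁) _).mpr ⟨⟨c, hcΩ⟩, hc, rfl⟩)
        rw [← hy, Submodule.mkQ_apply, Submodule.mkQ_apply, hcompat] at h1
        exact h1
      rw [horthAL₁] at hyorth
      obtain ⟨a, haA, l, hlL₁, hal⟩ := Submodule.mem_sup.mp hyorth
      have hlΩ : l ∈ (ω.orthogonal I) := hL₁Ω hlL₁
      have haΩ : a ∈ (ω.orthogonal I) := by
        have ha' : a = (y : V) - l := by rw [← hal]; abel
        rw [ha']; exact sub_mem y.2 hlΩ
      rw [hW₂b]
      refine ⟨(I.comap (ω.orthogonal I).subtype).mkQ ⟨a, haΩ⟩, ?_, ?_⟩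
      · rw [hAb]; exact (hmem A _).mpr ⟨⟨a, haΩ⟩, haA, rfl⟩
      · have heq : (I.comap (ω.orthogonal I).subtype).mkQ ⟨a, haΩ⟩ = w - (I.comap (ω.orthogonal I).subtype).mkQ ⟨l, hlΩ⟩ := by
          rw [← hy, ← map_sub]
          congr 1
          exact Subtype.ext (by
            show a = (y : V) - l
            rw [← hal]; abel)
        have hlLb₁ : (I.comap (ω.orthogonal I).subtype).mkQ ⟨l, hlΩ⟩ ∈ Lb₁ := by
          rw [hLb₁]; exact (hmem L₁ _).mpr ⟨⟨l, hlΩ⟩, hlL₁, rfl⟩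
        rw [heq, map_sub, hPleft w hwLb₂, hPright _ hlLb₁, sub_zero]
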